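/- Let (X,U,p,r,γ) be a finite MDP and let π′ and π̃ be two policies whose state–action value functions Q^{π′} and Q^{π̃} satisfy their respective Bellman equations, with value functions V^{π′}, V^{π̃} and advantage function A^{π̃}. Let μ be a probability mass function on X and let d_{π′} be the discounted state visitation distribution of π′ with initial distribution μ. Then (1−γ) · Σ_{x∈X} μ(x) (V^{π′}(x) − V^{π̃}(x)) = Σ_{x∈X} d_{π′}(x) Σ_{u∈U} π′(u|x) A^{π̃}(x,u). (Performance difference lemma, equality part of Lemma 1.) -/
import Mathlib


open Finset

/-- **Performance difference lemma (equality part of Lemma 1).**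
For a finite MDP `(X, U, p, r, γ)`, two policies `π'` and `π̃` with state–action
value functions `Q'`, `Qt` satisfying their Bellman equations, value functions
`V^π(x) = Σ_u π(u|x) Q^π(x,u)`, advantage `A^π̃(x,u) = Qt(x,u) − V^π̃(x)`,
an initial distribution `μ`, and `d` the discounted state visitation distribution
of `π'`, we have
`(1−γ) Σ_x μ(x) (V^{π'}(x) − V^{π̃}(x)) = Σ_x d(x) Σ_u π'(u|x) A^{π̃}(x,u)`. -/
theorem performance_difference_lemma
    {X U : Type*} [Fintype X] [Fintype U] [Nonempty X] [Nonempty U]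
    (γ : ℝ) (hγ0 : 0 ≤ γ) (hγ1 : γ < 1)
    (p : X → U → X → ℝ)
    (hp_nonneg : ∀ x u x', 0 ≤ p x u x')
    (hp_sum : ∀ x u, ∑ x', p x u x' = 1)
    (r : X → U → ℝ)
    (π' πt : X → U → ℝ)
    (hπ'_nonneg : ∀ x u, 0 ≤ π' x u) (hπ'_sum : ∀ x, ∑ u, π' x u = 1)
    (hπt_nonneg : ∀ x u, 0 ≤ πt x u) (hπt_sum : ∀ x, ∑ u, πt x u = 1)
    (Q' Qt : X → U → ℝ)
    (hQ' : ∀ x u, Q' x u = r x u + γ * ∑ x', p x u x' * ∑ u', π' x' u' * Q' x' u')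
    (hQt : ∀ x u, Qt x u = r x u + γ * ∑ x', p x u x' * ∑ u', πt x' u' * Qt x' u')
    (μ : X → ℝ) (hμ_nonneg : ∀ x, 0 ≤ μ x) (hμ_sum : ∑ x, μ x = 1)
    (d : X → ℝ)
    (hd_flow : ∀ x', d x' = (1 - γ) * μ x' + γ * ∑ x, ∑ u, d x * π' x u * p x u x')
    (hd_nonneg : ∀ x, 0 ≤ d x) (hd_sum : ∑ x, d x = 1) :
    (1 - γ) * ∑ x, μ x * ((∑ u, π' x u * Q' x u) - (∑ u, πt x u * Qt x u)) =
      ∑ x, d x * ∑ u, π' x u * (Qt x u - ∑ u', πt x u' * Qt x u') := by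
  set A : X → ℝ := fun x => (∑ u, π' x u * Q' x u) - (∑ u, πt x u * Qt x u) with hA
  have hμ' : ∀ x', (1 - γ) * μ x' =
      d x' - γ * ∑ x, ∑ u, d x * π' x u * p x u x' := by
    intro x'; have := hd_flow x'; linarith
  -- per-state identity for the RHS summand
  have key : ∀ x, ∑ u, π' x u * (Qt x u - ∑ u', πt x u' * Qt x u') =
      A x - γ * ∑ u, π' x u * ∑ x', p x u x' * A x' := by
    intro x
    have h1 : ∑ u, π' x u * (Qt x u - ∑ u', πt x u' * Qt x u')
        = (∑ u, π' x u * Qt x u) - (∑ u', πt x u' * Qt x u') := by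
      simp only [mul_sub, Finset.sum_sub_distrib, ← Finset.sum_mul, hπ'_sum, one_mul]
    have h2 : (∑ u, π' x u * Qt x u) - (∑ u, π' x u * Q' x u)
        = -(γ * ∑ u, π' x u * ∑ x', p x u x' * A x') := by
      rw [← Finset.sum_sub_distrib, Finset.mul_sum, ← Finset.sum_neg_distrib]
      refine Finset.sum_congr rfl fun u _ => ?_
      rw [hQt x u, hQ' x u]
      have h3 : ∑ x', p x u x' * A x'
          = (∑ x', p x u x' * ∑ u', π' x' u' * Q' x' u')
            - ∑ x', p x u x' * ∑ u', πt x' u' * Qt x' u' := by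
        simp only [hA, mul_sub, Finset.sum_sub_distrib]
      rw [h3]; ring
    have hAx : A x = (∑ u, π' x u * Q' x u) - (∑ u, πt x u * Qt x u) := rfl
    rw [h1]
    linarith [h2, hAx]
  calc (1 - γ) * ∑ x, μ x * A x
      = ∑ x, ((1 - γ) * μ x) * A x := by
        rw [Finset.mul_sum]; exact Finset.sum_congr rfl fun x _ => by ring
    _ = ∑ x, (d x - γ * ∑ x0, ∑ u, d x0 * π' x0 u * p x0 u x) * A x :=
        Finset.sum_congr rfl fun x _ => by rw [hμ' x]
    _ = (∑ x, d x * A x)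
        - γ * ∑ x, ∑ x0, ∑ u, d x0 * π' x0 u * p x0 u x * A x := by
        rw [Finset.mul_sum, ← Finset.sum_sub_distrib]
        refine Finset.sum_congr rfl fun x _ => ?_
        have hS : (∑ x0, ∑ u, d x0 * π' x0 u * p x0 u x) * A x
            = ∑ x0, ∑ u, d x0 * π' x0 u * p x0 u x * A x := by
          simp only [Finset.sum_mul]
        rw [sub_mul, mul_assoc, hS]
    _ = (∑ x, d x * A x)
        - γ * ∑ x0, ∑ u, ∑ x, d x0 * π' x0 u * p x0 u x * A x := by
        congr 1
        rw [Finset.sum_comm]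
        exact congrArg _ (Finset.sum_congr rfl fun x0 _ => Finset.sum_comm)
    _ = ∑ x, d x * ∑ u, π' x u * (Qt x u - ∑ u', πt x u' * Qt x u') := by
        rw [Finset.sum_congr rfl fun x (_ : x ∈ Finset.univ) => congrArg (d x * ·) (key x)]
        simp only [mul_sub, Finset.sum_sub_distrib, Finset.mul_sum]
        congr 1
        refine Finset.sum_congr rfl fun x0 _ => Finset.sum_congr rfl fun u _ => ?_
        exact Finset.sum_congr rfl fun x _ => by ring
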